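/- For integers m ≤ y ≤ b-1 (with a < m < b, n > 0), the cumulative distribution function of DTSP(a,m,b,n) satisfies F(y) = 1 - ((b-m)/(b-a)) · ((b-y-1)/(b-m))^n. -/

import Mathlib

open Finset

lemma tele_left (a : ℤ) (n : ℝ) (hn : 0 < n) :
    ∀ y : ℤ, a ≤ y →
      ∑ t ∈ Finset.Icc a y, (((t - a + 1 : ℤ) : ℝ) ^ n - ((t - a : ℤ) : ℝ) ^ n)
        = ((y - a + 1 : ℤ) : ℝ) ^ n := by
  intro y
  refine Int.le_induction (motive := fun y _ => ∑ t ∈ Finset.Icc a y,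
      (((t - a + 1 : ℤ) : ℝ) ^ n - ((t - a : ℤ) : ℝ) ^ n)
        = ((y - a + 1 : ℤ) : ℝ) ^ n) ?_ ?_ y
  · simp [Real.zero_rpow hn.ne']
  · intro y hy ih
    rw [show Finset.Icc a (y + 1) = insert (y + 1) (Finset.Icc a y) by
          ext t; simp only [Finset.mem_insert, Finset.mem_Icc]; omega,
        Finset.sum_insert (by simp), ih]
    push_cast
    ring_nf

lemma tele_right (m b : ℤ) (n : ℝ) :
    ∀ y : ℤ, m ≤ y →
      ∑ t ∈ Finset.Icc m y, (((b - t : ℤ) : ℝ) ^ n - ((b - t - 1 : ℤ) : ℝ) ^ n)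
        = ((b - m : ℤ) : ℝ) ^ n - ((b - y - 1 : ℤ) : ℝ) ^ n := by
  intro y
  refine Int.le_induction (motive := fun y _ => ∑ t ∈ Finset.Icc m y,
      (((b - t : ℤ) : ℝ) ^ n - ((b - t - 1 : ℤ) : ℝ) ^ n)
        = ((b - m : ℤ) : ℝ) ^ n - ((b - y - 1 : ℤ) : ℝ) ^ n) ?_ ?_ y
  · simp
  · intro y hy ih
    rw [show Finset.Icc m (y + 1) = insert (y + 1) (Finset.Icc m y) by
          ext t; simp only [Finset.mem_insert, Finset.mem_Icc]; omega,
        Finset.sum_insert (by simp), ih]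
    push_cast
    ring_nf

lemma key_alg (A B C P Q R : ℝ) (hAC : A + B = C) (hC : C ≠ 0)
    (hP : P ≠ 0) (hQ : Q ≠ 0) (hB : B ≠ 0) :
    (P * A) / (C * P) + (Q * B - R) / (C * Q) = 1 - B / C * (R / (Q * B)) := by
  field_simp
  subst hAC
  ring

/-- The pmf of the discrete two-sided power distribution DTSP(a, m, b, n). -/
noncomputable def dtspPmf (a m b : ℤ) (n : ℝ) (y : ℤ) : ℝ :=
  if y < m then
    (((y - a + 1 : ℤ) : ℝ) ^ n - ((y - a : ℤ) : ℝ) ^ n) /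
      (((b - a : ℤ) : ℝ) * ((m - a : ℤ) : ℝ) ^ (n - 1))
  else
    (((b - y : ℤ) : ℝ) ^ n - ((b - y - 1 : ℤ) : ℝ) ^ n) /
      (((b - a : ℤ) : ℝ) * ((b - m : ℤ) : ℝ) ^ (n - 1))

/-- CDF of DTSP on the right branch. -/
theorem dtsp_cdf_right (a m b : ℤ) (n : ℝ)
    (ham : a < m) (hmb : m < b) (hn : 0 < n)
    (y : ℤ) (hmy : m ≤ y) (hyb : y ≤ b - 1) :
    ∑ t ∈ Finset.Icc a y, dtspPmf a m b n t =
      1 - (((b - m : ℤ) : ℝ) / ((b - a : ℤ) : ℝ)) *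
        (((b - y - 1 : ℤ) : ℝ) / ((b - m : ℤ) : ℝ)) ^ n := by
  have hma : (0:ℝ) < ((m - a : ℤ) : ℝ) := by exact_mod_cast Int.sub_pos.mpr ham
  have hbm : (0:ℝ) < ((b - m : ℤ) : ℝ) := by exact_mod_cast Int.sub_pos.mpr hmb
  have hba : (0:ℝ) < ((b - a : ℤ) : ℝ) := by
    exact_mod_cast Int.sub_pos.mpr (ham.trans hmb)
  have hsplit : Finset.Icc a y = Finset.Icc a (m-1) ∪ Finset.Icc m y := by
    ext t; simp only [Finset.mem_union, Finset.mem_Icc]; omega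
  have hdisj : Disjoint (Finset.Icc a (m-1)) (Finset.Icc m y) := by
    rw [Finset.disjoint_left]; intro t ht ht'
    simp only [Finset.mem_Icc] at ht ht'; omega
  rw [hsplit, Finset.sum_union hdisj]
  have hL : ∑ t ∈ Finset.Icc a (m-1), dtspPmf a m b n t
      = ((m - a : ℤ) : ℝ) ^ n / (((b - a : ℤ) : ℝ) * ((m - a : ℤ) : ℝ) ^ (n - 1)) := by
    have hcong : ∀ t ∈ Finset.Icc a (m-1), dtspPmf a m b n t =
        (((t - a + 1 : ℤ) : ℝ) ^ n - ((t - a : ℤ) : ℝ) ^ n) /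
          (((b - a : ℤ) : ℝ) * ((m - a : ℤ) : ℝ) ^ (n - 1)) := by
      intro t ht
      simp only [Finset.mem_Icc] at ht
      rw [dtspPmf, if_pos (by omega)]
    rw [Finset.sum_congr rfl hcong, ← Finset.sum_div,
        tele_left a n hn (m-1) (by omega),
        show (m - 1 - a + 1 : ℤ) = m - a by ring]
  have hR : ∑ t ∈ Finset.Icc m y, dtspPmf a m b n t
      = (((b - m : ℤ) : ℝ) ^ n - ((b - y - 1 : ℤ) : ℝ) ^ n)
          / (((b - a : ℤ) : ℝ) * ((b - m : ℤ) : ℝ) ^ (n - 1)) := by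
    have hcong : ∀ t ∈ Finset.Icc m y, dtspPmf a m b n t =
        (((b - t : ℤ) : ℝ) ^ n - ((b - t - 1 : ℤ) : ℝ) ^ n) /
          (((b - a : ℤ) : ℝ) * ((b - m : ℤ) : ℝ) ^ (n - 1)) := by
      intro t ht
      simp only [Finset.mem_Icc] at ht
      rw [dtspPmf, if_neg (by omega)]
    rw [Finset.sum_congr rfl hcong, ← Finset.sum_div, tele_right m b n y hmy]
  have e1 : ((m - a : ℤ) : ℝ) ^ n = ((m - a : ℤ) : ℝ) ^ (n-1) * ((m - a : ℤ) : ℝ) := by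
    rw [← Real.rpow_add_one hma.ne']; ring_nf
  have e2 : ((b - m : ℤ) : ℝ) ^ n = ((b - m : ℤ) : ℝ) ^ (n-1) * ((b - m : ℤ) : ℝ) := by
    rw [← Real.rpow_add_one hbm.ne']; ring_nf
  have hby : (0:ℝ) ≤ ((b - y - 1 : ℤ) : ℝ) := by
    have : (0:ℤ) ≤ b - y - 1 := by omega
    exact_mod_cast this
  have hAC : ((m - a : ℤ) : ℝ) + ((b - m : ℤ) : ℝ) = ((b - a : ℤ) : ℝ) := by
    push_cast; ring
  rw [hL, hR, Real.div_rpow hby hbm.le, e1, e2]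
  exact key_alg _ _ _ _ _ _ hAC hba.ne' (Real.rpow_pos_of_pos hma (n-1)).ne'
    (Real.rpow_pos_of_pos hbm (n-1)).ne' hbm.ne'
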